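/- Let K be a simplicial complex with a covering K = K_1 ∪ ⋯ ∪ K_r by subcomplexes, and suppose the symmetric group Σ_r acts simplicially on K so that g · K_i = K_{g(i)} for all g ∈ Σ_r and all i. Let N(K) be the nerve of this covering, on which Σ_r acts by permuting the sets K_1,…,K_r. Then there exists a Σ_r-equivariant continuous map from K to the geometric realization of Δ(N(K)), the order complex of the face poset of N(K) (the barycentric subdivision of the nerve). -/

import Mathlib

/-- An abstract simplicial complex on a vertex type `V`: a downward-closed collection of
nonempty finite vertex sets. -/
structure AbstractSimplicialComplex' (V : Type) where
  faces : Set (Finset V)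
  nonempty_of_mem : ∀ s ∈ faces, s.Nonempty
  down_closed : ∀ s ∈ faces, ∀ t, t ⊆ s → t.Nonempty → t ∈ faces

/-- The geometric realization of an abstract simplicial complex, as the set of convex
weightings of the vertices supported on a face. -/
def realization {V : Type} (K : AbstractSimplicialComplex' V) : Set (V → ℝ) :=
  {x | (∀ v, 0 ≤ x v) ∧ ∃ s ∈ K.faces, (∀ v, x v ≠ 0 → v ∈ s) ∧ ∑ v ∈ s, x v = 1}

/-- The geometric realization of the barycentric subdivision `Δ(N(K))` of the nerve of the
covering of `K` by the subcomplexes `Ksub i`: its vertices are the faces of the nerve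
(the nonempty `S : Finset (Fin r)` such that the subcomplexes `Ksub i`, `i ∈ S`, have a
common face), and its simplices are chains of such sets. -/
def nerveSubdivisionRealization {V : Type} (r : ℕ) (K : AbstractSimplicialComplex' V)
    (Ksub : Fin r → Set (Finset V)) : Set (Finset (Fin r) → ℝ) :=
  {y | (∀ S, 0 ≤ y S) ∧ (∑ S, y S = 1) ∧
    (∀ S, y S ≠ 0 → S.Nonempty ∧ ∃ s ∈ K.faces, ∀ i ∈ S, s ∈ Ksub i) ∧
    (∀ S T, y S ≠ 0 → y T ≠ 0 → S ⊆ T ∨ T ⊆ S)}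


noncomputable section NerveAux

open Finset

set_option linter.unusedSectionVars false

variable {V : Type} [DecidableEq V]

/-- max of `0` and the values of `x` on `s`. -/
def msup (x : V → ℝ) (s : Finset V) : ℝ := s.fold max 0 x

lemma msup_nonneg (x : V → ℝ) (s : Finset V) : 0 ≤ msup x s :=
  (Finset.le_fold_max _).2 (Or.inl le_rfl)

lemma le_msup {x : V → ℝ} {s : Finset V} {v : V} (hv : v ∈ s) : x v ≤ msup x s :=
  (Finset.le_fold_max _).2 (Or.inr ⟨v, hv, le_rfl⟩)

lemma msup_le {x : V → ℝ} {s : Finset V} {c : ℝ} (h0 : 0 ≤ c) (h : ∀ v ∈ s, x v ≤ c) :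
    msup x s ≤ c := (Finset.fold_max_le _).2 ⟨h0, h⟩

/-- The barycentric coordinate attached to the subset `u` of `A`. -/
def coef (x : V → ℝ) (A u : Finset V) : ℝ :=
  if h : u.Nonempty then (u.card : ℝ) * max 0 (u.inf' h x - msup x (A \ u)) else 0

lemma coef_nonneg (x : V → ℝ) (A u : Finset V) : 0 ≤ coef x A u := by
  unfold coef
  split
  · exact mul_nonneg (Nat.cast_nonneg _) (le_max_left _ _)
  · exact le_rfl

lemma coef_eq_zero (x : V → ℝ) (A u : Finset V) {v : V} (hv : v ∈ u) (hxv : x v ≤ 0) :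
    coef x A u = 0 := by
  have hu : u.Nonempty := ⟨v, hv⟩
  rw [coef, dif_pos hu]
  have h1 : u.inf' hu x ≤ 0 := le_trans (Finset.inf'_le _ hv) hxv
  have h2 : u.inf' hu x - msup x (A \ u) ≤ 0 := by linarith [msup_nonneg x (A \ u)]
  rw [max_eq_left h2, mul_zero]

lemma coef_ne_zero {x : V → ℝ} {A u : Finset V} (h : coef x A u ≠ 0) :
    ∃ hu : u.Nonempty, msup x (A \ u) < u.inf' hu x := by
  by_cases hu : u.Nonempty
  · refine ⟨hu, ?_⟩
    rw [coef, dif_pos hu] at h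
    by_contra hle
    push_neg at hle
    rw [max_eq_left (by linarith), mul_zero] at h
    exact h rfl
  · rw [coef, dif_neg hu] at h; exact absurd rfl h

lemma inf'_close {x y : V → ℝ} {u : Finset V} (hu : u.Nonempty) {δ : ℝ}
    (h : ∀ v ∈ u, |x v - y v| ≤ δ) : |u.inf' hu x - u.inf' hu y| ≤ δ := by
  obtain ⟨v, hv, hvx⟩ := Finset.exists_mem_eq_inf' hu x
  obtain ⟨w, hw, hwy⟩ := Finset.exists_mem_eq_inf' hu y
  have h1 : u.inf' hu x ≤ x w := Finset.inf'_le _ hw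
  have h2 : u.inf' hu y ≤ y v := Finset.inf'_le _ hv
  have h3 := h v hv
  have h4 := h w hw
  rw [abs_sub_le_iff] at h3 h4 ⊢
  exact ⟨by linarith [h3.1, h4.1], by linarith [h3.2, h4.2]⟩

lemma msup_close {x y : V → ℝ} {s : Finset V} {δ : ℝ} (hδ : 0 ≤ δ)
    (h : ∀ v ∈ s, |x v - y v| ≤ δ) : |msup x s - msup y s| ≤ δ := by
  rw [abs_sub_le_iff]
  constructor
  · have : msup x s ≤ msup y s + δ := by
      refine msup_le (by linarith [msup_nonneg y s]) (fun v hv => ?_)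
      have := (abs_sub_le_iff.1 (h v hv)).1
      linarith [le_msup (x := y) hv]
    linarith
  · have : msup y s ≤ msup x s + δ := by
      refine msup_le (by linarith [msup_nonneg x s]) (fun v hv => ?_)
      have := (abs_sub_le_iff.1 (h v hv)).2
      linarith [le_msup (x := x) hv]
    linarith

lemma max0_lip (a b : ℝ) : |max 0 a - max 0 b| ≤ |a - b| := by
  rw [max_comm 0 a, max_comm 0 b]
  exact abs_max_sub_max_le_abs a b 0

lemma inf'_sub_const {u : Finset V} (hu : u.Nonempty) (x : V → ℝ) (c : ℝ) :
    u.inf' hu (fun v => x v - c) = u.inf' hu x - c := by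
  obtain ⟨v, hv, hveq⟩ := Finset.exists_mem_eq_inf' hu x
  apply le_antisymm
  · have h1 : u.inf' hu (fun v => x v - c) ≤ x v - c := Finset.inf'_le _ hv
    linarith [h1, hveq.ge, hveq.le]
  · exact Finset.le_inf' _ _ (fun w hw => by
      have h2 : u.inf' hu x ≤ x w := Finset.inf'_le _ hw
      linarith)


lemma coef_close {x y : V → ℝ} {B u : Finset V} {eta : ℝ} (heta : 0 ≤ eta)
    (hu : ∀ v ∈ u, |x v - y v| ≤ eta) (hB : ∀ v ∈ B \ u, |x v - y v| ≤ eta) :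
    |coef x B u - coef y B u| ≤ (u.card : ℝ) * (2 * eta) := by
  by_cases hne : u.Nonempty
  · rw [coef, coef, dif_pos hne, dif_pos hne, ← mul_sub, abs_mul,
      abs_of_nonneg (Nat.cast_nonneg (α := ℝ) u.card)]
    refine mul_le_mul_of_nonneg_left ?_ (Nat.cast_nonneg _)
    calc |max 0 (u.inf' hne x - msup x (B \ u)) - max 0 (u.inf' hne y - msup y (B \ u))|
        ≤ |(u.inf' hne x - msup x (B \ u)) - (u.inf' hne y - msup y (B \ u))| :=
          max0_lip _ _
      _ ≤ |u.inf' hne x - u.inf' hne y| + |msup x (B \ u) - msup y (B \ u)| := by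
          have h := abs_sub (u.inf' hne x - u.inf' hne y) (msup x (B \ u) - msup y (B \ u))
          have e : (u.inf' hne x - msup x (B \ u)) - (u.inf' hne y - msup y (B \ u))
              = (u.inf' hne x - u.inf' hne y) - (msup x (B \ u) - msup y (B \ u)) := by ring
          rw [e]
          exact abs_sub _ _
      _ ≤ eta + eta := add_le_add (inf'_close hne hu) (msup_close heta hB)
      _ = 2 * eta := by ring
  · rw [coef, coef, dif_neg hne, dif_neg hne, sub_zero, abs_zero]
    positivity

/-- The key identity: the coefficients `coef x A u` over all `u ⊆ A` sum to `∑ v ∈ A, x v`,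
provided `x` is nonnegative on `A`. -/
lemma sum_coef : ∀ (n : ℕ) (x : V → ℝ) (A : Finset V), (∀ v ∈ A, 0 ≤ x v) →
    (A.filter fun v => 0 < x v).card = n →
    ∑ u ∈ A.powerset, coef x A u = ∑ v ∈ A, x v := by
  intro n
  induction n using Nat.strong_induction_on with
  | _ n ih =>
    intro x A hx hn
    by_cases hP : (A.filter fun v => 0 < x v).Nonempty
    · -- inductive step
      set P := A.filter fun v => 0 < x v with hPdef
      have hPA : P ⊆ A := Finset.filter_subset _ _
      have hPpos : ∀ v ∈ P, 0 < x v := fun v hv => (Finset.mem_filter.1 hv).2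
      set a := P.inf' hP x with hadef
      have ha : 0 < a := by
        rw [hadef, Finset.lt_inf'_iff]
        exact hPpos
      have hax : ∀ v ∈ P, a ≤ x v := fun v hv => Finset.inf'_le _ hv
      set x' : V → ℝ := fun v => if 0 < x v then x v - a else x v with hx'def
      have hx'A : ∀ v ∈ A, 0 ≤ x' v := by
        intro v hv
        by_cases h : 0 < x v
        · have : a ≤ x v := hax v (Finset.mem_filter.2 ⟨hv, h⟩)
          simp only [hx'def, if_pos h]; linarith
        · simp only [hx'def, if_neg h]; exact hx v hv
      -- the new positive part is strictly smaller
      obtain ⟨v₀, hv₀P, hv₀⟩ := Finset.exists_mem_eq_inf' hP x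
      have hP'ss : (A.filter fun v => 0 < x' v) ⊂ P := by
        constructor
        · intro v hv
          obtain ⟨hvA, hvpos⟩ := Finset.mem_filter.1 hv
          refine Finset.mem_filter.2 ⟨hvA, ?_⟩
          by_contra h
          simp only [hx'def, if_neg h] at hvpos
          exact h hvpos
        · intro hcon
          have := hcon hv₀P
          obtain ⟨_, hpos⟩ := Finset.mem_filter.1 this
          have : x' v₀ = 0 := by
            simp only [hx'def, if_pos (hPpos v₀ hv₀P)]
            rw [← hv₀]; ring
          rw [this] at hpos
          exact lt_irrefl 0 hpos
      have hcard : (A.filter fun v => 0 < x' v).card < n := by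
        rw [← hn]; exact Finset.card_lt_card hP'ss
      have hih := ih _ hcard x' A hx'A rfl
      -- pointwise comparison of coefficients
      have key : ∀ u ∈ A.powerset, coef x A u
          = coef x' A u + (if u = P then a * (P.card : ℝ) else 0) := by
        intro u hu
        rw [Finset.mem_powerset] at hu
        by_cases hne : u.Nonempty
        · by_cases huP : u ⊆ P
          · by_cases hEq : u = P
            · subst hEq
              have hzA : ∀ v ∈ A \ P, x v ≤ 0 := by
                intro v hv
                obtain ⟨hvA, hvnP⟩ := Finset.mem_sdiff.1 hv
                by_contra h
                exact hvnP (Finset.mem_filter.2 ⟨hvA, not_le.1 h⟩)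
              have hmsx : msup x (A \ P) = 0 :=
                le_antisymm (msup_le le_rfl hzA) (msup_nonneg _ _)
              have hmsx' : msup x' (A \ P) = 0 := by
                refine le_antisymm (msup_le le_rfl ?_) (msup_nonneg _ _)
                intro v hv
                have h := hzA v hv
                simp only [hx'def, if_neg (not_lt.2 h)]
                exact h
              have hinf' : P.inf' hne x' = 0 := by
                apply le_antisymm
                · have h1 : P.inf' hne x' ≤ x' v₀ := Finset.inf'_le _ hv₀P
                  have h2 : x' v₀ = 0 := by
                    simp only [hx'def, if_pos (hPpos v₀ hv₀P)]
                    rw [← hv₀]; ring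
                  rw [h2] at h1; exact h1
                · refine Finset.le_inf' _ _ (fun w hw => ?_)
                  have := hax w hw
                  simp only [hx'def, if_pos (hPpos w hw)]
                  linarith
              have hinfx : P.inf' hne x = a := rfl
              rw [coef, coef, dif_pos hne, dif_pos hne, hmsx, hmsx', hinf', hinfx,
                if_pos rfl, sub_zero, sub_zero, max_eq_right ha.le, max_self, mul_zero,
                zero_add, mul_comm]
            · -- u ⊊ P
              have hssP : u ⊂ P := HasSubset.Subset.ssubset_of_ne huP hEq
              obtain ⟨w, hwP, hwu⟩ := Finset.exists_of_ssubset hssP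
              have hwAu : w ∈ A \ u := Finset.mem_sdiff.2 ⟨hPA hwP, hwu⟩
              have hale : a ≤ msup x (A \ u) := le_trans (hax w hwP) (le_msup hwAu)
              have hinf : u.inf' hne x' = u.inf' hne x - a := by
                rw [show u.inf' hne x' = u.inf' hne (fun v => x v - a) from
                  Finset.inf'_congr hne rfl (fun v hv => by
                    simp only [hx'def, if_pos (hPpos v (huP hv))])]
                exact inf'_sub_const hne x a
              have hms : msup x' (A \ u) = msup x (A \ u) - a := by
                apply le_antisymm
                · refine msup_le (by linarith) (fun v hv => ?_)
                  by_cases h : 0 < x v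
                  · simp only [hx'def, if_pos h]
                    linarith [le_msup (x := x) hv]
                  · simp only [hx'def, if_neg h]
                    push_neg at h
                    linarith
                · rw [sub_le_iff_le_add]
                  refine msup_le (by linarith [msup_nonneg x' (A \ u)]) (fun v hv => ?_)
                  by_cases h : 0 < x v
                  · have : x v = x' v + a := by simp only [hx'def, if_pos h]; ring
                    rw [this]
                    have := le_msup (x := x') hv
                    linarith
                  · push_neg at h
                    linarith [msup_nonneg x' (A \ u)]
              rw [coef, coef, dif_pos hne, dif_pos hne, hinf, hms, if_neg hEq, add_zero]
              ring_nf
          · -- some vertex of u has x v ≤ 0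
            obtain ⟨v, hv, hvnP⟩ := Finset.not_subset.1 huP
            have hvA : v ∈ A := hu hv
            have hxv : x v ≤ 0 := by
              by_contra h
              exact hvnP (Finset.mem_filter.2 ⟨hvA, lt_of_not_ge h⟩)
            have hx'v : x' v ≤ 0 := by
              simp only [hx'def, if_neg (not_lt.2 hxv)]; exact hxv
            rw [coef_eq_zero x A u hv hxv, coef_eq_zero x' A u hv hx'v,
              if_neg (by rintro rfl; exact hvnP hv), add_zero]
        · have hnP : u ≠ P := by rintro rfl; exact hne hP
          rw [coef, coef, dif_neg hne, dif_neg hne, if_neg hnP, add_zero]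
      rw [Finset.sum_congr rfl key, Finset.sum_add_distrib, hih,
        Finset.sum_ite_eq' A.powerset P (fun _ => a * (P.card : ℝ)),
        if_pos (Finset.mem_powerset.2 hPA)]
      have hdecomp : ∀ v ∈ A, x v = x' v + (if 0 < x v then a else 0) := by
        intro v hv
        by_cases h : 0 < x v <;> simp [hx'def, h]
      rw [Finset.sum_congr rfl hdecomp, Finset.sum_add_distrib]
      congr 1
      rw [← Finset.sum_filter, ← hPdef, Finset.sum_const, nsmul_eq_mul, mul_comm]
    · -- base case : x vanishes on A
      have hzero : ∀ v ∈ A, x v = 0 := by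
        intro v hv
        by_contra h
        exact hP ⟨v, Finset.mem_filter.2 ⟨hv, lt_of_le_of_ne (hx v hv) (Ne.symm h)⟩⟩
      rw [Finset.sum_eq_zero hzero, Finset.sum_eq_zero]
      intro u hu
      rw [Finset.mem_powerset] at hu
      rcases u.eq_empty_or_nonempty with rfl | ⟨v, hv⟩
      · rw [coef, dif_neg (by simp)]
      · exact coef_eq_zero x A u hv (hzero v (hu hv)).le


variable {r : ℕ}

/-- The nerve face attached to a simplex `u`: the set of indices `i` with `u ∈ Ksub i`. -/
def nerveSet (Ksub : Fin r → Set (Finset V)) (u : Finset V) : Finset (Fin r) :=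
  @Finset.filter _ (fun i => u ∈ Ksub i) (Classical.decPred _) Finset.univ

lemma mem_nerveSet {Ksub : Fin r → Set (Finset V)} {u : Finset V} {i : Fin r} :
    i ∈ nerveSet Ksub u ↔ u ∈ Ksub i := by
  simp [nerveSet, Finset.mem_filter]

/-- The coordinates of the image point in the subdivided nerve. -/
def yfun (Ksub : Fin r → Set (Finset V)) (x : V → ℝ) (A : Finset V)
    (S : Finset (Fin r)) : ℝ :=
  ∑ u ∈ A.powerset, if nerveSet Ksub u = S then coef x A u else 0

lemma yfun_nonneg (Ksub : Fin r → Set (Finset V)) (x : V → ℝ) (A : Finset V)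
    (S : Finset (Fin r)) : 0 ≤ yfun Ksub x A S := by
  refine Finset.sum_nonneg (fun u _ => ?_)
  split
  · exact coef_nonneg x A u
  · exact le_rfl

lemma sum_yfun (Ksub : Fin r → Set (Finset V)) (x : V → ℝ) (A : Finset V) :
    ∑ S, yfun Ksub x A S = ∑ u ∈ A.powerset, coef x A u := by
  unfold yfun
  rw [Finset.sum_comm]
  refine Finset.sum_congr rfl (fun u _ => ?_)
  rw [Finset.sum_ite_eq Finset.univ (nerveSet Ksub u) (fun _ => coef x A u),
    if_pos (Finset.mem_univ _)]

lemma yfun_indep (Ksub : Fin r → Set (Finset V)) (x : V → ℝ) {A B : Finset V}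
    (hA : ∀ v, v ∉ A → x v = 0) (hAB : A ⊆ B) (S : Finset (Fin r)) :
    yfun Ksub x B S = yfun Ksub x A S := by
  unfold yfun
  rw [← Finset.sum_subset (Finset.powerset_mono.2 hAB) (fun u hu hnu => ?_)]
  · refine Finset.sum_congr rfl (fun u hu => ?_)
    rw [Finset.mem_powerset] at hu
    have hc : coef x B u = coef x A u := by
      unfold coef
      split
      · congr 1
        congr 1
        congr 1
        refine le_antisymm (msup_le (msup_nonneg _ _) (fun v hv => ?_))
          (msup_le (msup_nonneg _ _) (fun v hv => ?_))
        · obtain ⟨hvB, hvu⟩ := Finset.mem_sdiff.1 hv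
          by_cases hvA : v ∈ A
          · exact le_msup (Finset.mem_sdiff.2 ⟨hvA, hvu⟩)
          · rw [hA v hvA]; exact msup_nonneg _ _
        · obtain ⟨hvA, hvu⟩ := Finset.mem_sdiff.1 hv
          exact le_msup (Finset.mem_sdiff.2 ⟨hAB hvA, hvu⟩)
      · rfl
    rw [hc]
  · rw [Finset.mem_powerset] at hu
    rw [Finset.mem_powerset] at hnu
    obtain ⟨v, hvu, hvA⟩ := Finset.not_subset.1 hnu
    rw [coef_eq_zero x B u hvu (hA v hvA).le]
    split <;> rfl


end NerveAux

noncomputable section NerveAux2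
set_option linter.unusedSectionVars false

open Finset

variable {V : Type} [DecidableEq V] {r : ℕ}

/-- The image coordinates lie in the subdivided nerve. -/
lemma yfun_mem (K : AbstractSimplicialComplex' V) (Ksub : Fin r → Set (Finset V))
    (hdown : ∀ i, ∀ s ∈ Ksub i, ∀ t, t ⊆ s → t.Nonempty → t ∈ Ksub i)
    (hcover : ∀ s ∈ K.faces, ∃ i, s ∈ Ksub i)
    (x : V → ℝ) (A : Finset V) (hA : ∀ v, x v ≠ 0 ↔ v ∈ A)
    (hpos : ∀ v, 0 ≤ x v) (s : Finset V) (hs : s ∈ K.faces) (hAs : A ⊆ s)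
    (hsum : ∑ v ∈ A, x v = 1) :
    (fun S => yfun Ksub x A S) ∈ nerveSubdivisionRealization r K Ksub := by
  have hface : ∀ u, u ⊆ A → u.Nonempty → u ∈ K.faces := fun u hu hne =>
    K.down_closed s hs u (hu.trans hAs) hne
  have hterm : ∀ S, yfun Ksub x A S ≠ 0 →
      ∃ u, u ⊆ A ∧ u.Nonempty ∧ nerveSet Ksub u = S ∧ coef x A u ≠ 0 := by
    intro S hS
    obtain ⟨u, hu, hune⟩ := Finset.exists_ne_zero_of_sum_ne_zero hS
    rw [Finset.mem_powerset] at hu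
    by_cases h : nerveSet Ksub u = S
    · rw [if_pos h] at hune
      have hne : u.Nonempty := (coef_ne_zero hune).choose
      exact ⟨u, hu, hne, h, hune⟩
    · rw [if_neg h] at hune; exact absurd rfl hune
  refine ⟨fun S => yfun_nonneg _ _ _ _, ?_, ?_, ?_⟩
  · rw [sum_yfun]
    rw [sum_coef ((A.filter fun v => 0 < x v).card) x A (fun v _ => hpos v) rfl]
    exact hsum
  · intro S hS
    obtain ⟨u, huA, hune, hnerve, hcne⟩ := hterm S hS
    have huf : u ∈ K.faces := hface u huA hune
    obtain ⟨i, hi⟩ := hcover u huf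
    refine ⟨⟨i, hnerve ▸ mem_nerveSet.2 hi⟩, u, huf, fun j hj => ?_⟩
    exact mem_nerveSet.1 (hnerve ▸ hj)
  · intro S T hS hT
    obtain ⟨u, huA, hune, hnS, hcu⟩ := hterm S hS
    obtain ⟨u', huA', hune', hnT, hcu'⟩ := hterm T hT
    obtain ⟨_, hlu⟩ := coef_ne_zero hcu
    obtain ⟨_, hlu'⟩ := coef_ne_zero hcu'
    have hcomp : u ⊆ u' ∨ u' ⊆ u := by
      by_contra hcon
      push_neg at hcon
      obtain ⟨v, hv, hvn⟩ := Finset.not_subset.1 hcon.1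
      obtain ⟨w, hw, hwn⟩ := Finset.not_subset.1 hcon.2
      have h1 : x v ≤ msup x (A \ u') := le_msup (Finset.mem_sdiff.2 ⟨huA hv, hvn⟩)
      have h2 : x w ≤ msup x (A \ u) := le_msup (Finset.mem_sdiff.2 ⟨huA' hw, hwn⟩)
      have h3 : u'.inf' hune' x ≤ x w := Finset.inf'_le _ hw
      have h4 : u.inf' hune x ≤ x v := Finset.inf'_le _ hv
      linarith
    have hmono : ∀ w w' : Finset V, w ⊆ w' → w.Nonempty →
        nerveSet Ksub w' ⊆ nerveSet Ksub w := by
      intro w w' hww hwne i hi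
      exact mem_nerveSet.2 (hdown i w' (mem_nerveSet.1 hi) w hww hwne)
    rcases hcomp with h | h
    · exact Or.inr (hnS ▸ hnT ▸ hmono u u' h hune)
    · exact Or.inl (hnT ▸ hnS ▸ hmono u' u h hune')


/-- The quantitative continuity estimate. -/
lemma yfun_estimate (Ksub : Fin r → Set (Finset V))
    (x₀ x' : V → ℝ) (A A' : Finset V) (hAA' : A ⊆ A')
    (hx₀pos : ∀ v, 0 ≤ x₀ v) (hx'pos : ∀ v, 0 ≤ x' v)
    (hx₀supp : ∀ v, v ∉ A → x₀ v = 0)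
    (hsum₀ : ∑ v ∈ A, x₀ v = 1) (hsum' : ∑ v ∈ A', x' v = 1)
    {δ : ℝ} (hδ : 0 ≤ δ) (hclose : ∀ v ∈ A, |x' v - x₀ v| ≤ δ) (S : Finset (Fin r)) :
    |yfun Ksub x' A' S - yfun Ksub x₀ A S| ≤
      (2 : ℝ) ^ (A.card + 1) * (2 * A.card * (A.card + 1)) * δ := by
  set eta : ℝ := ((A.card : ℝ) + 1) * δ with hetadef
  have heta : 0 ≤ eta := by positivity
  -- mass of x' outside A is at most A.card * δ
  have habs : |∑ v ∈ A, x' v - ∑ v ∈ A, x₀ v| ≤ (A.card : ℝ) * δ := by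
    rw [← Finset.sum_sub_distrib]
    calc |∑ v ∈ A, (x' v - x₀ v)| ≤ ∑ v ∈ A, |x' v - x₀ v| :=
          Finset.abs_sum_le_sum_abs _ _
      _ ≤ A.card • δ := Finset.sum_le_card_nsmul _ _ _ hclose
      _ = (A.card : ℝ) * δ := by rw [nsmul_eq_mul]
  have hmass : ∑ v ∈ A' \ A, x' v ≤ (A.card : ℝ) * δ := by
    have hsplit : ∑ v ∈ A' \ A, x' v + ∑ v ∈ A, x' v = ∑ v ∈ A', x' v :=
      Finset.sum_sdiff hAA'
    have := abs_sub_le_iff.1 habs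
    rw [hsum₀] at this
    rw [hsum'] at hsplit
    linarith [this.2]
  -- uniform closeness on all of A'
  have hpoint : ∀ v ∈ A', |x' v - x₀ v| ≤ eta := by
    intro v hv
    by_cases hvA : v ∈ A
    · calc |x' v - x₀ v| ≤ δ := hclose v hvA
        _ = 1 * δ := (one_mul δ).symm
        _ ≤ ((A.card : ℝ) + 1) * δ := by
            apply mul_le_mul_of_nonneg_right _ hδ
            have : (0:ℝ) ≤ (A.card : ℝ) := Nat.cast_nonneg _
            linarith
    · rw [hx₀supp v hvA, sub_zero, abs_of_nonneg (hx'pos v)]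
      calc x' v ≤ ∑ w ∈ A' \ A, x' w :=
            Finset.single_le_sum (fun w _ => hx'pos w) (Finset.mem_sdiff.2 ⟨hv, hvA⟩)
        _ ≤ (A.card : ℝ) * δ := hmass
        _ ≤ eta := by rw [hetadef]; nlinarith [Nat.cast_nonneg (α := ℝ) A.card]
  -- per-term bound for u ⊆ A
  set c₁ : ℝ := (A.card : ℝ) * (2 * eta) with hc₁def
  have hc₁ : 0 ≤ c₁ := by positivity
  have hperterm : ∀ u ∈ A.powerset, |coef x' A' u - coef x₀ A' u| ≤ c₁ := by
    intro u hu
    rw [Finset.mem_powerset] at hu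
    calc |coef x' A' u - coef x₀ A' u| ≤ (u.card : ℝ) * (2 * eta) :=
          coef_close heta (fun v hv => hpoint v (hAA' (hu hv)))
            (fun v hv => hpoint v (Finset.mem_sdiff.1 hv).1)
      _ ≤ c₁ := by
          rw [hc₁def]
          apply mul_le_mul_of_nonneg_right _ (by positivity)
          exact_mod_cast Nat.cast_le.2 (Finset.card_le_card hu)
  -- x₀-coefficients vanish off subsets of A
  have hx₀vanish : ∀ u, u ∈ A'.powerset → u ∉ A.powerset → coef x₀ A' u = 0 := by
    intro u hu hnu
    rw [Finset.mem_powerset] at hnu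
    obtain ⟨v, hvu, hvA⟩ := Finset.not_subset.1 hnu
    exact coef_eq_zero x₀ A' u hvu (hx₀supp v hvA).le
  have hpows : A.powerset ⊆ A'.powerset := Finset.powerset_mono.2 hAA'
  -- total sums
  have htotal' : ∑ u ∈ A'.powerset, coef x' A' u = 1 := by
    rw [sum_coef ((A'.filter fun v => 0 < x' v).card) x' A' (fun v _ => hx'pos v) rfl]
    exact hsum'
  have htotal₀ : ∑ u ∈ A'.powerset, coef x₀ A' u = 1 := by
    rw [sum_coef ((A'.filter fun v => 0 < x₀ v).card) x₀ A' (fun v _ => hx₀pos v) rfl]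
    rw [← Finset.sum_sdiff hAA', hsum₀]
    rw [Finset.sum_eq_zero (fun v hv => hx₀supp v (Finset.mem_sdiff.1 hv).2), zero_add]
  have hA₀sum : ∑ u ∈ A.powerset, coef x₀ A' u = 1 := by
    rw [Finset.sum_subset hpows (fun u hu hnu => hx₀vanish u hu hnu)]
    exact htotal₀
  -- the A-part of the x' sum is close to 1
  have hApart : (1 : ℝ) - 2 ^ A.card * c₁ ≤ ∑ u ∈ A.powerset, coef x' A' u := by
    have hdiff : |∑ u ∈ A.powerset, coef x' A' u - ∑ u ∈ A.powerset, coef x₀ A' u|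
        ≤ 2 ^ A.card * c₁ := by
      rw [← Finset.sum_sub_distrib]
      calc |∑ u ∈ A.powerset, (coef x' A' u - coef x₀ A' u)|
          ≤ ∑ u ∈ A.powerset, |coef x' A' u - coef x₀ A' u| :=
            Finset.abs_sum_le_sum_abs _ _
        _ ≤ A.powerset.card • c₁ := Finset.sum_le_card_nsmul _ _ _ hperterm
        _ = 2 ^ A.card * c₁ := by
            rw [Finset.card_powerset, nsmul_eq_mul]; push_cast; ring
    rw [hA₀sum] at hdiff
    linarith [(abs_sub_le_iff.1 hdiff).2]
  -- the tail is small
  have htail : ∑ u ∈ A'.powerset \ A.powerset, coef x' A' u ≤ 2 ^ A.card * c₁ := by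
    have := Finset.sum_sdiff (f := fun u => coef x' A' u) hpows
    rw [htotal'] at this
    linarith [hApart]
  -- now assemble
  have hindep : yfun Ksub x₀ A S = yfun Ksub x₀ A' S :=
    (yfun_indep Ksub x₀ hx₀supp hAA' S).symm
  rw [hindep]
  unfold yfun
  rw [← Finset.sum_sdiff (f := fun u => if nerveSet Ksub u = S then coef x' A' u else 0)
    hpows,
    ← Finset.sum_sdiff (f := fun u => if nerveSet Ksub u = S then coef x₀ A' u else 0)
    hpows]
  have hzero₀ : ∑ u ∈ A'.powerset \ A.powerset,
      (if nerveSet Ksub u = S then coef x₀ A' u else 0) = 0 := by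
    refine Finset.sum_eq_zero (fun u hu => ?_)
    obtain ⟨hu1, hu2⟩ := Finset.mem_sdiff.1 hu
    rw [hx₀vanish u hu1 hu2]
    split <;> rfl
  rw [hzero₀, zero_add]
  have e1 : |∑ u ∈ A.powerset, ((if nerveSet Ksub u = S then coef x' A' u else 0)
      - (if nerveSet Ksub u = S then coef x₀ A' u else 0))| ≤ 2 ^ A.card * c₁ := by
    calc |∑ u ∈ A.powerset, ((if nerveSet Ksub u = S then coef x' A' u else 0)
        - (if nerveSet Ksub u = S then coef x₀ A' u else 0))|
        ≤ ∑ u ∈ A.powerset, |(if nerveSet Ksub u = S then coef x' A' u else 0)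
          - (if nerveSet Ksub u = S then coef x₀ A' u else 0)| :=
          Finset.abs_sum_le_sum_abs _ _
      _ ≤ A.powerset.card • c₁ := by
          refine Finset.sum_le_card_nsmul _ _ _ (fun u hu => ?_)
          split
          · exact hperterm u hu
          · rw [sub_zero, abs_zero]; exact hc₁
      _ = 2 ^ A.card * c₁ := by
          rw [Finset.card_powerset, nsmul_eq_mul]; push_cast; ring
  have e2 : (0:ℝ) ≤ ∑ u ∈ A'.powerset \ A.powerset,
      (if nerveSet Ksub u = S then coef x' A' u else 0) := by
    refine Finset.sum_nonneg (fun u _ => ?_)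
    split
    · exact coef_nonneg _ _ _
    · exact le_rfl
  have e3 : ∑ u ∈ A'.powerset \ A.powerset,
      (if nerveSet Ksub u = S then coef x' A' u else 0) ≤ 2 ^ A.card * c₁ := by
    refine le_trans (Finset.sum_le_sum (fun u _ => ?_)) htail
    split
    · exact le_rfl
    · exact coef_nonneg _ _ _
  have hfin : (2:ℝ) ^ A.card * c₁ + 2 ^ A.card * c₁
      = (2 : ℝ) ^ (A.card + 1) * (2 * A.card * (A.card + 1)) * δ := by
    rw [hc₁def, hetadef]; ring
  rw [Finset.sum_sub_distrib] at e1
  obtain ⟨e1a, e1b⟩ := abs_sub_le_iff.1 e1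
  rw [abs_sub_le_iff]
  constructor
  · linarith
  · linarith


lemma image_perm_eq_iff {r : ℕ} (g : Equiv.Perm (Fin r)) (T S : Finset (Fin r)) :
    T.image ⇑g = S ↔ T = S.image ⇑g⁻¹ := by
  constructor
  · rintro rfl
    rw [Finset.image_image]
    refine (Finset.image_congr (fun i _ => ?_)).symm.trans Finset.image_id |>.symm
    · simp
  · rintro rfl
    rw [Finset.image_image]
    refine (Finset.image_congr (fun i _ => ?_)).trans Finset.image_id
    simp

lemma yfun_perm (Ksub : Fin r → Set (Finset V)) (σ : Equiv.Perm V)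
    (g : Equiv.Perm (Fin r))
    (hact' : ∀ (i : Fin r) (u : Finset V), u ∈ Ksub i ↔ u.image σ ∈ Ksub (g i))
    (x x' : V → ℝ) (hx' : ∀ v, x' v = x (σ.symm v)) (A : Finset V)
    (S : Finset (Fin r)) :
    yfun Ksub x' (A.image ⇑σ) S = yfun Ksub x A (S.image ⇑g⁻¹) := by
  have hxcomp : ∀ v, x' (σ v) = x v := fun v => by rw [hx' (σ v), Equiv.symm_apply_apply]
  have hnerve : ∀ u : Finset V, nerveSet Ksub (u.image ⇑σ) = (nerveSet Ksub u).image ⇑g := by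
    intro u
    ext j
    rw [mem_nerveSet]
    constructor
    · intro hj
      refine Finset.mem_image.2 ⟨g⁻¹ j, mem_nerveSet.2 ?_, by simp⟩
      rw [hact' (g⁻¹ j) u]
      simpa using hj
    · intro hj
      obtain ⟨i, hi, rfl⟩ := Finset.mem_image.1 hj
      exact (hact' i u).1 (mem_nerveSet.1 hi)
  have himg : ∀ u : Finset V, (u.image ⇑σ).image ⇑σ.symm = u := fun u => by
    rw [Finset.image_image]
    exact (Finset.image_congr (fun v _ => by simp)).trans Finset.image_id
  have himg' : ∀ u : Finset V, (u.image ⇑σ.symm).image ⇑σ = u := fun u => by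
    rw [Finset.image_image]
    exact (Finset.image_congr (fun v _ => by simp)).trans Finset.image_id
  have hcoef : ∀ u : Finset V, coef x' (A.image ⇑σ) (u.image ⇑σ) = coef x A u := by
    intro u
    by_cases hne : u.Nonempty
    · have hne' : (u.image ⇑σ).Nonempty := hne.image _
      have h1 : (u.image ⇑σ).inf' hne' x' = u.inf' hne x := by
        rw [Finset.inf'_image]
        exact Finset.inf'_congr hne rfl (fun v hv => hxcomp v)
      have h2 : msup x' (A.image ⇑σ \ u.image ⇑σ) = msup x (A \ u) := by
        rw [← Finset.image_sdiff A u σ.injective]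
        unfold msup
        rw [Finset.fold_image (fun a _ b _ h => σ.injective h)]
        exact Finset.fold_congr (fun v _ => hxcomp v)
      rw [coef, coef, dif_pos hne, dif_pos hne', h1, h2,
        Finset.card_image_of_injective _ σ.injective]
    · rw [coef, coef, dif_neg hne, dif_neg (by simpa using hne)]
  unfold yfun
  refine (Finset.sum_bij' (fun (u : Finset V) (_ : u ∈ A.powerset) => u.image ⇑σ)
    (fun (u' : Finset V) (_ : u' ∈ (A.image ⇑σ).powerset) => u'.image ⇑σ.symm)
    ?_ ?_ ?_ ?_ ?_).symm
  · intro u hu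
    rw [Finset.mem_powerset] at hu ⊢
    exact Finset.image_subset_image hu
  · intro u' hu'
    rw [Finset.mem_powerset] at hu' ⊢
    exact (Finset.image_subset_image hu').trans (le_of_eq (himg A))
  · intro u hu
    exact himg u
  · intro u' hu'
    exact himg' u'
  · intro u hu
    rw [hcoef u, hnerve u]
    by_cases h : nerveSet Ksub u = S.image ⇑g⁻¹
    · rw [if_pos h, if_pos ((image_perm_eq_iff g _ S).2 h)]
    · rw [if_neg h, if_neg (fun hc => h ((image_perm_eq_iff g _ S).1 hc))]


end NerveAux2

set_option maxHeartbeats 1000000 in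
/-- **Proposition 3.4**. -/
theorem exists_equivariant_map_to_nerve_subdivision
    {V : Type} [DecidableEq V] (r : ℕ) (K : AbstractSimplicialComplex' V)
    (ρ : Equiv.Perm (Fin r) →* Equiv.Perm V)
    (hρ : ∀ g : Equiv.Perm (Fin r), ∀ s ∈ K.faces, s.image (ρ g) ∈ K.faces)
    (Ksub : Fin r → Set (Finset V))
    (hsub : ∀ i, Ksub i ⊆ K.faces)
    (hdown : ∀ i, ∀ s ∈ Ksub i, ∀ t, t ⊆ s → t.Nonempty → t ∈ Ksub i)
    (hcover : ∀ s ∈ K.faces, ∃ i, s ∈ Ksub i)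
    (hact : ∀ (g : Equiv.Perm (Fin r)) (i : Fin r) (s : Finset V),
      s ∈ Ksub i ↔ s.image (ρ g) ∈ Ksub (g i)) :
    ∃ F : ↥(realization K) → ↥(nerveSubdivisionRealization r K Ksub),
      Continuous F ∧
      ∀ (g : Equiv.Perm (Fin r)) (x x' : ↥(realization K)),
        (∀ v, x'.val v = x.val ((ρ g).symm v)) →
        ∀ S : Finset (Fin r), (F x').val S = (F x).val (S.image ⇑g⁻¹) := by
  classical
  have hfin : ∀ x : ↥(realization K), (Function.support x.1).Finite := by
    rintro ⟨x, hpos, s, hs, hsupp, hsum⟩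
    exact Set.Finite.subset s.finite_toSet (fun v hv => hsupp v hv)
  set sF : ↥(realization K) → Finset V := fun x => (hfin x).toFinset with hsFdef
  have hsF : ∀ (x : ↥(realization K)) (v : V), v ∈ sF x ↔ x.1 v ≠ 0 := fun x v => by
    simp [hsFdef, Set.Finite.mem_toFinset, Function.mem_support]
  have hposx : ∀ (x : ↥(realization K)) (v : V), 0 ≤ x.1 v := fun x => x.2.1
  have hsupp0 : ∀ (x : ↥(realization K)) (v : V), v ∉ sF x → x.1 v = 0 :=
    fun x v hv => not_not.1 (fun h => hv ((hsF x v).2 h))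
  have hsum1 : ∀ x : ↥(realization K), ∑ v ∈ sF x, x.1 v = 1 := by
    intro x
    obtain ⟨hpos, s, hs, hsupp, hsum⟩ := x.2
    rw [Finset.sum_subset (fun v hv => hsupp v ((hsF x v).1 hv))
      (fun v _ hnv => hsupp0 x v hnv)]
    exact hsum
  have hmem : ∀ x : ↥(realization K),
      (fun S => yfun Ksub x.1 (sF x) S) ∈ nerveSubdivisionRealization r K Ksub := by
    intro x
    obtain ⟨hpos, s, hs, hsupp, hsum⟩ := x.2
    exact yfun_mem K Ksub hdown hcover x.1 (sF x) (fun v => (hsF x v).symm) hpos s hs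
      (fun v hv => hsupp v ((hsF x v).1 hv)) (hsum1 x)
  refine ⟨fun x => ⟨fun S => yfun Ksub x.1 (sF x) S, hmem x⟩, ?_, ?_⟩
  · -- continuity
    refine Continuous.subtype_mk ?_ _
    refine continuous_pi (fun S => ?_)
    rw [continuous_iff_continuousAt]
    intro x₀
    rw [ContinuousAt, Metric.tendsto_nhds]
    intro ε hε
    set A : Finset V := sF x₀ with hAdef
    set C : ℝ := (2 : ℝ) ^ (A.card + 1) * (2 * A.card * (A.card + 1)) with hCdef
    have hC0 : 0 ≤ C := by positivity
    set δ : ℝ := ε / (C + 1) with hδdef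
    have hδ : 0 < δ := by positivity
    have hev : ∀ᶠ x' in nhds x₀, ∀ v ∈ A, |x'.1 v - x₀.1 v| ≤ δ := by
      rw [Filter.eventually_all_finset]
      intro v _
      have hc : Continuous fun x' : ↥(realization K) => x'.1 v :=
        (continuous_apply v).comp continuous_subtype_val
      have hca := hc.continuousAt (x := x₀)
      rw [ContinuousAt, Metric.tendsto_nhds] at hca
      exact (hca δ hδ).mono (fun x' h => by rw [Real.dist_eq] at h; exact h.le)
    refine hev.mono (fun x' hx' => ?_)
    rw [Real.dist_eq]
    set A' : Finset V := A ∪ sF x' with hA'def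
    have h1 : yfun Ksub x'.1 (sF x') S = yfun Ksub x'.1 A' S :=
      (yfun_indep Ksub x'.1 (hsupp0 x') Finset.subset_union_right S).symm
    have hsum'A' : ∑ v ∈ A', x'.1 v = 1 := by
      rw [← Finset.sum_subset (Finset.subset_union_right (s₁ := A))
        (fun v _ hnv => hsupp0 x' v hnv)]
      exact hsum1 x'
    have hbound := yfun_estimate Ksub x₀.1 x'.1 A A' Finset.subset_union_left
      (hposx x₀) (hposx x') (hsupp0 x₀) (hsum1 x₀) hsum'A' hδ.le hx' S
    rw [h1]
    have hlt : C * δ < ε := by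
      rw [hδdef]
      calc C * (ε / (C + 1)) < (C + 1) * (ε / (C + 1)) :=
            mul_lt_mul_of_pos_right (lt_add_one C) (by positivity)
        _ = ε := by field_simp
    calc |yfun Ksub x'.1 A' S - yfun Ksub x₀.1 A S| ≤ C * δ := hbound
      _ < ε := hlt
  · -- equivariance
    intro g x x' hxx' S
    simp only
    have hsFx' : sF x' = (sF x).image ⇑(ρ g) := by
      ext v
      rw [hsF x' v, hxx' v, Finset.mem_image]
      constructor
      · intro h
        exact ⟨(ρ g).symm v, (hsF x _).2 h, Equiv.apply_symm_apply _ _⟩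
      · rintro ⟨w, hw, rfl⟩
        rw [Equiv.symm_apply_apply]
        exact (hsF x w).1 hw
    rw [hsFx']
    exact yfun_perm Ksub (ρ g) g (fun i u => hact g i u) x.1 x'.1 hxx' (sF x) S
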